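/- There exist permutations σ₀, σ₁, σ∞, σ_t of a set with 18 elements such that: σ₀ is a product of 9 disjoint transpositions (cycle type consisting of nine 2's); σ₁ is a product of 6 disjoint 3-cycles (cycle type consisting of six 3's); σ∞ is a product of 2 disjoint 9-cycles (cycle type {9,9}); σ_t is a transposition (cycle type {2}); the composition σ₀ ∘ σ₁ ∘ σ∞ ∘ σ_t is the identity; and the subgroup generated by σ₀, σ₁, σ∞ acts transitively on the 18 points. -/

import Mathlib

open Equiv Equiv.Perm List
set_option maxRecDepth 20000

private def p (l : List (Fin 18)) : Perm (Fin 18) := l.formPerm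

private lemma ct_p (l : List (Fin 18)) (hl : l.Nodup) (hn : 2 ≤ l.length) :
    (p l).cycleType = {l.length} := by
  have hc : (p l).IsCycle := List.isCycle_formPerm hl hn
  rw [hc.cycleType]
  show (↑[(p l).support.card] : Multiset ℕ) = {l.length}
  rw [show (p l).support = l.toFinset from
    support_formPerm_of_nodup l hl (by rintro x rfl; simp at hn)]
  congr 1
  rw [List.card_toFinset, hl.dedup]

private lemma dct {σ τ : Perm (Fin 18)} (h : ∀ x, σ x = x ∨ τ x = x) :
    (σ * τ).cycleType = σ.cycleType + τ.cycleType :=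
  Equiv.Perm.Disjoint.cycleType_mul (Equiv.Perm.disjoint_iff_eq_or_eq.mpr h)

private def sig0 : Perm (Fin 18) := p [0, 5] * p [1, 14] * p [2, 7] * p [3, 11] * p [4, 16] * p [6, 12] * p [8, 13] * p [9, 15] * p [10, 17]
private def sig1 : Perm (Fin 18) := p [0, 13, 6] * p [1, 5, 16] * p [2, 14, 8] * p [3, 7, 12] * p [4, 11, 17] * p [9, 10, 15]
private def sigi : Perm (Fin 18) := p [0, 1, 2, 3, 4, 5, 6, 7, 8] * p [9, 10, 11, 12, 13, 14, 15, 16, 17]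
private def sigt : Perm (Fin 18) := p [15, 14]

private lemma ct_sig0 : sig0.cycleType = Multiset.replicate 9 2 := by
  show (p [0, 5] * p [1, 14] * p [2, 7] * p [3, 11] * p [4, 16] * p [6, 12] * p [8, 13] * p [9, 15] * p [10, 17]).cycleType = _
  rw [dct (by decide), dct (by decide), dct (by decide), dct (by decide), dct (by decide), dct (by decide), dct (by decide), dct (by decide), ct_p [0, 5] (by decide) (by decide), ct_p [1, 14] (by decide) (by decide), ct_p [2, 7] (by decide) (by decide), ct_p [3, 11] (by decide) (by decide), ct_p [4, 16] (by decide) (by decide), ct_p [6, 12] (by decide) (by decide), ct_p [8, 13] (by decide) (by decide), ct_p [9, 15] (by decide) (by decide), ct_p [10, 17] (by decide) (by decide)]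
  decide

private lemma ct_sig1 : sig1.cycleType = Multiset.replicate 6 3 := by
  show (p [0, 13, 6] * p [1, 5, 16] * p [2, 14, 8] * p [3, 7, 12] * p [4, 11, 17] * p [9, 10, 15]).cycleType = _
  rw [dct (by decide), dct (by decide), dct (by decide), dct (by decide), dct (by decide), ct_p [0, 13, 6] (by decide) (by decide), ct_p [1, 5, 16] (by decide) (by decide), ct_p [2, 14, 8] (by decide) (by decide), ct_p [3, 7, 12] (by decide) (by decide), ct_p [4, 11, 17] (by decide) (by decide), ct_p [9, 10, 15] (by decide) (by decide)]
  decide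

private lemma ct_sigi : sigi.cycleType = ({9, 9} : Multiset ℕ) := by
  show (p [0, 1, 2, 3, 4, 5, 6, 7, 8] * p [9, 10, 11, 12, 13, 14, 15, 16, 17]).cycleType = _
  rw [dct (by decide), ct_p [0, 1, 2, 3, 4, 5, 6, 7, 8] (by decide) (by decide), ct_p [9, 10, 11, 12, 13, 14, 15, 16, 17] (by decide) (by decide)]
  decide

private lemma ct_sigt : sigt.cycleType = ({2} : Multiset ℕ) := by
  show (p [15, 14]).cycleType = _
  rw [ct_p [15, 14] (by decide) (by decide)]
  decide

private lemma reach : ∀ i : Fin 18, ∃ g ∈ Subgroup.closure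
    ({sig0, sig1, sigi} : Set (Perm (Fin 18))), g 0 = i := by
  have h0 : sig0 ∈ Subgroup.closure ({sig0, sig1, sigi} : Set (Perm (Fin 18))) :=
    Subgroup.subset_closure (by simp)
  have h1 : sig1 ∈ Subgroup.closure ({sig0, sig1, sigi} : Set (Perm (Fin 18))) :=
    Subgroup.subset_closure (by simp)
  have hi : sigi ∈ Subgroup.closure ({sig0, sig1, sigi} : Set (Perm (Fin 18))) :=
    Subgroup.subset_closure (by simp)
  intro i
  fin_cases i
  · exact ⟨1, one_mem _, by decide⟩
  · exact ⟨sigi, hi, by decide⟩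
  · exact ⟨sigi * sigi, mul_mem hi hi, by decide⟩
  · exact ⟨sigi * sigi * sigi, mul_mem (mul_mem hi hi) hi, by decide⟩
  · exact ⟨sig0 * sig1 * sig0, mul_mem (mul_mem h0 h1) h0, by decide⟩
  · exact ⟨sig0, h0, by decide⟩
  · exact ⟨sigi * sig0, mul_mem hi h0, by decide⟩
  · exact ⟨sigi * sigi * sig0, mul_mem (mul_mem hi hi) h0, by decide⟩
  · exact ⟨sig0 * sig1, mul_mem h0 h1, by decide⟩
  · exact ⟨sigi * sigi * sig1 * sig0, mul_mem (mul_mem (mul_mem hi hi) h1) h0, by decide⟩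
  · exact ⟨sig0 * sigi * sig1 * sig0, mul_mem (mul_mem (mul_mem h0 hi) h1) h0, by decide⟩
  · exact ⟨sig1 * sig0 * sig1 * sig0, mul_mem (mul_mem (mul_mem h1 h0) h1) h0, by decide⟩
  · exact ⟨sig0 * sigi * sig0, mul_mem (mul_mem h0 hi) h0, by decide⟩
  · exact ⟨sig1, h1, by decide⟩
  · exact ⟨sigi * sig1, mul_mem hi h1, by decide⟩
  · exact ⟨sigi * sigi * sig1, mul_mem (mul_mem hi hi) h1, by decide⟩
  · exact ⟨sig1 * sig0, mul_mem h1 h0, by decide⟩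
  · exact ⟨sigi * sig1 * sig0, mul_mem (mul_mem hi h1) h0, by decide⟩

/-- Existence of permutations encoding a degree 18 branched covering of the projective line
realizing the Hurwitz data (2,3,9) of the paper, with one free simple branch point:
cycle types of σ₀, σ₁, σ∞ are as prescribed, σ_t is a transposition, the composition
σ₀ ∘ σ₁ ∘ σ∞ ∘ σ_t is the identity, and ⟨σ₀, σ₁, σ∞⟩ is transitive on the 18 points. -/
theorem stmt13 :
    ∃ σ₀ σ₁ σ_inf σ_t : Equiv.Perm (Fin 18),
      σ₀.cycleType = (Multiset.replicate 9 2) ∧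
      σ₁.cycleType = (Multiset.replicate 6 3) ∧
      σ_inf.cycleType = {9, 9} ∧
      σ_t.cycleType = {2} ∧
      σ₀ * σ₁ * σ_inf * σ_t = 1 ∧
      ∀ i j : Fin 18, ∃ g ∈ Subgroup.closure ({σ₀, σ₁, σ_inf} : Set (Equiv.Perm (Fin 18))),
        g i = j := by
  refine ⟨sig0, sig1, sigi, sigt, ct_sig0, ct_sig1, ct_sigi, ct_sigt, by decide, ?_⟩
  intro i j
  obtain ⟨gi, hgi, hgi0⟩ := reach i
  obtain ⟨gj, hgj, hgj0⟩ := reach j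
  refine ⟨gj * gi⁻¹, mul_mem hgj (inv_mem hgi), ?_⟩
  rw [Equiv.Perm.mul_apply, ← hgi0, Equiv.Perm.inv_def, Equiv.symm_apply_apply, hgj0]
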